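/- For any graph G, any S ⊆ V(G), any maximal matching M of G, and any integer q ≥ 2, one has |M| ≤ χ'_q(G,S) ≤ χ'_q(G) ≤ 2q·|M|. -/

import Mathlib

open Finset

variable {V : Type*}

/-- The set of colours appearing on edges incident to vertex `v`. -/
def vColors (G : SimpleGraph V) (f : V → V → ℕ) (v : V) : Set ℕ :=
  {c | ∃ u, G.Adj v u ∧ f v u = c}

/-- The set of colours used on edges of `G`. -/
def colorsOf (G : SimpleGraph V) (f : V → V → ℕ) : Set ℕ :=
  {c | ∃ u v, G.Adj u v ∧ f u v = c}

/-- An edge `q`-colouring: a symmetric assignment of colours to edges such that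
every vertex is incident with at most `q` distinct colours. -/
def IsEdgeQColoring (G : SimpleGraph V) (q : ℕ) (f : V → V → ℕ) : Prop :=
  (∀ u v, f u v = f v u) ∧ ∀ v, (vColors G f v).ncard ≤ q

/-- `S`-composability: every vertex of `S` sees at most `q - 1` non-zero colours. -/
def IsComposable (G : SimpleGraph V) (q : ℕ) (S : Set V) (f : V → V → ℕ) : Prop :=
  ∀ v ∈ S, ((vColors G f v) \ {0}).ncard ≤ q - 1

/-- `χ'_q(G, S)`: maximum number of non-zero colours of an `S`-composable edge
`q`-colouring of `G`. -/
noncomputable def chiq (G : SimpleGraph V) (q : ℕ) (S : Set V) : ℕ :=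
  sSup {k | ∃ f, IsEdgeQColoring G q f ∧ IsComposable G q S f ∧
    ((colorsOf G f) \ {0}).ncard = k}

/-- `χ'_q(G)`: maximum number of distinct colours of an edge `q`-colouring of `G`. -/
noncomputable def chimax (G : SimpleGraph V) (q : ℕ) : ℕ :=
  sSup {k | ∃ f, IsEdgeQColoring G q f ∧ (colorsOf G f).ncard = k}

/-- `M` is a matching in `G`: a set of edges, pairwise not sharing a vertex. -/
def IsMatchingSet (G : SimpleGraph V) (M : Set (Sym2 V)) : Prop :=
  M ⊆ G.edgeSet ∧ ∀ e ∈ M, ∀ e' ∈ M, e ≠ e' → ∀ v, v ∈ e → v ∉ e'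

/-- `M` is a maximal matching in `G`. -/
def IsMaximalMatchingSet (G : SimpleGraph V) (M : Set (Sym2 V)) : Prop :=
  IsMatchingSet G M ∧ ∀ e ∈ G.edgeSet, ∃ e' ∈ M, ∃ v, v ∈ e ∧ v ∈ e'

/-- `X` is a vertex cover of `G`. -/
def IsVertexCover (G : SimpleGraph V) (X : Set V) : Prop :=
  ∀ e ∈ G.edgeSet, ∃ v ∈ X, v ∈ e

/-- A layering of `G`. -/
def IsLayering (G : SimpleGraph V) (lam : V → ℤ) : Prop :=
  ∀ u v, G.Adj u v → |lam u - lam v| ≤ 1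

/-- The graph part `G_m` of the `(λ, r, m)`-stratification: delete all edges `uv`
with `λ(u) ≡ m` and `λ(v) ≡ m + 1 (mod r)`. -/
def stratGraph (G : SimpleGraph V) (lam : V → ℤ) (r m : ℤ) : SimpleGraph V where
  Adj u v := G.Adj u v ∧
    ¬ ((lam u ≡ m [ZMOD r] ∧ lam v ≡ m + 1 [ZMOD r]) ∨
       (lam v ≡ m [ZMOD r] ∧ lam u ≡ m + 1 [ZMOD r]))
  symm := ⟨by
    intro u v h
    exact ⟨h.1.symm, fun hc => h.2 hc.symm⟩⟩
  loopless := ⟨fun v h => G.loopless.irrefl v h.1⟩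

/-- The set `S_m` of the `(λ, r, m)`-stratification: vertices incident with deleted
edges. -/
def stratSet (G : SimpleGraph V) (lam : V → ℤ) (r m : ℤ) : Set V :=
  {v | ∃ u, G.Adj v u ∧ ¬ (stratGraph G lam r m).Adj v u}


lemma ncard_biUnion_le_aux {α β : Type*} {T : Set α} (hT : T.Finite)
    {g : α → Set β} {k : ℕ} (h : ∀ a ∈ T, (g a).ncard ≤ k) :
    (⋃ a ∈ T, g a).ncard ≤ k * T.ncard := by
  revert h
  refine Set.Finite.induction_on (motive := fun T _ => (∀ a ∈ T, (g a).ncard ≤ k) →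
    (⋃ a ∈ T, g a).ncard ≤ k * T.ncard) T hT (by simp) ?_
  intro a T haT hTfin ih h
  have h1 : (⋃ x ∈ insert a T, g x) = g a ∪ ⋃ x ∈ T, g x := by
    simp [Set.biUnion_insert]
  rw [h1]
  calc (g a ∪ ⋃ x ∈ T, g x).ncard ≤ (g a).ncard + (⋃ x ∈ T, g x).ncard :=
        Set.ncard_union_le _ _
    _ ≤ k + k * T.ncard :=
        Nat.add_le_add (h a (Set.mem_insert _ _))
          (ih (fun x hx => h x (Set.mem_insert_of_mem _ hx)))
    _ = k * (insert a T).ncard := by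
        rw [Set.ncard_insert_of_notMem haT hTfin]; ring

lemma colorsOf_finite [Finite V] (G : SimpleGraph V) (f : V → V → ℕ) :
    (colorsOf G f).Finite := by
  apply Set.Finite.subset (Set.finite_range (fun p : V × V => f p.1 p.2))
  rintro c ⟨u, v, _, rfl⟩; exact ⟨(u, v), rfl⟩

lemma vColors_finite [Finite V] (G : SimpleGraph V) (f : V → V → ℕ) (v : V) :
    (vColors G f v).Finite := by
  apply Set.Finite.subset (Set.finite_range (f v))
  rintro c ⟨u, _, rfl⟩; exact ⟨u, rfl⟩

lemma colorsOf_ncard_le [Fintype V] (G : SimpleGraph V) (f : V → V → ℕ) :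
    (colorsOf G f).ncard ≤ Fintype.card (V × V) := by
  calc (colorsOf G f).ncard
      ≤ ((fun p : V × V => f p.1 p.2) '' Set.univ).ncard := by
        apply Set.ncard_le_ncard _ ((Set.finite_univ).image _)
        rintro c ⟨u, v, _, rfl⟩; exact ⟨(u, v), trivial, rfl⟩
    _ ≤ (Set.univ : Set (V × V)).ncard := Set.ncard_image_le Set.finite_univ
    _ = Fintype.card (V × V) := by
        rw [Set.ncard_univ, Nat.card_eq_fintype_card]

/-- for a maximal matching `M` and `q ≥ 2`,
`|M| ≤ χ'_q(G,S) ≤ χ'_q(G) ≤ 2q|M|`. -/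
theorem stmt1 [Fintype V] (G : SimpleGraph V) (S : Set V) (M : Set (Sym2 V))
    (hM : IsMaximalMatchingSet G M) (q : ℕ) (hq : 2 ≤ q) :
    M.ncard ≤ chiq G q S ∧ chiq G q S ≤ chimax G q ∧ chimax G q ≤ 2 * q * M.ncard := by
  classical
  obtain ⟨⟨hMsub, hMdisj⟩, hMmax⟩ := hM
  -- bounded above
  have hbdd1 : BddAbove {k | ∃ f, IsEdgeQColoring G q f ∧ IsComposable G q S f ∧
      ((colorsOf G f) \ {0}).ncard = k} := by
    refine ⟨Fintype.card (V × V), ?_⟩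
    rintro k ⟨f, _, _, rfl⟩
    exact le_trans (Set.ncard_le_ncard Set.diff_subset (colorsOf_finite G f))
      (colorsOf_ncard_le G f)
  have hbdd2 : BddAbove {k | ∃ f, IsEdgeQColoring G q f ∧ (colorsOf G f).ncard = k} := by
    refine ⟨Fintype.card (V × V), ?_⟩
    rintro k ⟨f, _, rfl⟩
    exact colorsOf_ncard_le G f
  -- the zero colouring
  have hzeroQ : IsEdgeQColoring G q (fun _ _ => 0) := by
    refine ⟨fun _ _ => rfl, fun v => ?_⟩
    have hsub : vColors G (fun _ _ => 0) v ⊆ {0} := by rintro c ⟨u, _, rfl⟩; rfl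
    calc (vColors G (fun _ _ => 0) v).ncard
        ≤ ({0} : Set ℕ).ncard := Set.ncard_le_ncard hsub (Set.finite_singleton _)
      _ = 1 := Set.ncard_singleton _
      _ ≤ q := by omega
  have hzeroComp : IsComposable G q S (fun _ _ => 0) := by
    intro v _
    have hsub : vColors G (fun _ _ => 0) v \ {0} ⊆ (∅ : Set ℕ) := by
      rintro c ⟨⟨u, _, rfl⟩, hc⟩; exact absurd rfl hc
    calc (vColors G (fun _ _ => 0) v \ {0}).ncard
        ≤ (∅ : Set ℕ).ncard := Set.ncard_le_ncard hsub Set.finite_empty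
      _ = 0 := Set.ncard_empty _
      _ ≤ q - 1 := Nat.zero_le _
  have hne1 : {k | ∃ f, IsEdgeQColoring G q f ∧ IsComposable G q S f ∧
      ((colorsOf G f) \ {0}).ncard = k}.Nonempty :=
    ⟨_, (fun _ _ => 0), hzeroQ, hzeroComp, rfl⟩
  have hne2 : {k | ∃ f, IsEdgeQColoring G q f ∧ (colorsOf G f).ncard = k}.Nonempty :=
    ⟨_, (fun _ _ => 0), hzeroQ, rfl⟩
  refine ⟨?_, ?_, ?_⟩
  · -- M.ncard ≤ chiq
    letI : Fintype (Sym2 V) := Fintype.ofFinite _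
    set g : Sym2 V → ℕ := fun s => (Fintype.equivFin (Sym2 V) s : ℕ) + 1 with hg
    have ginj : Function.Injective g := by
      intro a b hab
      have hv : ((Fintype.equivFin (Sym2 V)) a : ℕ) = ((Fintype.equivFin (Sym2 V)) b : ℕ) :=
        Nat.succ_injective hab
      exact (Fintype.equivFin (Sym2 V)).injective (Fin.val_injective hv)
    have gpos : ∀ s, g s ≠ 0 := fun s => Nat.succ_ne_zero _
    set f1 : V → V → ℕ := fun u v => if s(u, v) ∈ M then g s(u, v) else 0 with hf1
    have hsymm : ∀ u v, f1 u v = f1 v u := by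
      intro u v; simp only [hf1, Sym2.eq_swap]
    -- colours seen at a vertex
    have hkey : ∀ v, vColors G f1 v \ {0} ⊆ g '' {s | s ∈ M ∧ v ∈ s} := by
      rintro v c ⟨⟨u, hadj, rfl⟩, hc0⟩
      simp only [Set.mem_singleton_iff] at hc0
      by_cases hmem : s(v, u) ∈ M
      · exact ⟨s(v, u), ⟨hmem, Sym2.mem_mk_left v u⟩, (if_pos hmem).symm⟩
      · exact absurd (if_neg hmem) hc0
    have hsing : ∀ v, ({s | s ∈ M ∧ v ∈ s} : Set (Sym2 V)).ncard ≤ 1 := by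
      intro v
      rw [Set.ncard_le_one (Set.toFinite _)]
      rintro a ⟨haM, hav⟩ b ⟨hbM, hbv⟩
      by_contra hne
      exact hMdisj a haM b hbM hne v hav hbv
    have hdiff : ∀ v, (vColors G f1 v \ {0}).ncard ≤ 1 := by
      intro v
      calc (vColors G f1 v \ {0}).ncard
          ≤ (g '' {s | s ∈ M ∧ v ∈ s}).ncard :=
            Set.ncard_le_ncard (hkey v) ((Set.toFinite _).image _)
        _ ≤ ({s | s ∈ M ∧ v ∈ s} : Set (Sym2 V)).ncard := Set.ncard_image_le (Set.toFinite _)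
        _ ≤ 1 := hsing v
    have hQ : IsEdgeQColoring G q f1 := by
      refine ⟨hsymm, fun v => ?_⟩
      have hsub : vColors G f1 v ⊆ insert 0 (vColors G f1 v \ {0}) := by
        intro c hc
        by_cases hc0 : c = 0
        · exact Or.inl hc0
        · exact Or.inr ⟨hc, hc0⟩
      calc (vColors G f1 v).ncard
          ≤ (insert 0 (vColors G f1 v \ {0})).ncard :=
            Set.ncard_le_ncard hsub (((vColors_finite G f1 v).diff).insert _)
        _ ≤ (vColors G f1 v \ {0}).ncard + 1 := Set.ncard_insert_le _ _
        _ ≤ 2 := by have := hdiff v; omega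
        _ ≤ q := hq
    have hComp : IsComposable G q S f1 := by
      intro v _
      have := hdiff v
      omega
    have hcolors : colorsOf G f1 \ {0} = g '' M := by
      ext c
      constructor
      · rintro ⟨⟨u, v, hadj, rfl⟩, hc0⟩
        simp only [Set.mem_singleton_iff] at hc0
        by_cases hmem : s(u, v) ∈ M
        · exact ⟨s(u, v), hmem, (if_pos hmem).symm⟩
        · exact absurd (if_neg hmem) hc0
      · rintro ⟨s, hsM, rfl⟩
        have hse : s ∈ G.edgeSet := hMsub hsM
        induction s using Sym2.ind with
        | _ a b =>
          rw [SimpleGraph.mem_edgeSet] at hse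
          refine ⟨⟨a, b, hse, if_pos hsM⟩, ?_⟩
          simp only [Set.mem_singleton_iff]
          exact gpos _
    refine le_csSup hbdd1 ⟨f1, hQ, hComp, ?_⟩
    rw [hcolors, Set.ncard_image_of_injective _ ginj]
  · -- chiq ≤ chimax
    refine csSup_le hne1 ?_
    rintro k ⟨f, hfQ, _, rfl⟩
    calc (colorsOf G f \ {0}).ncard
        ≤ (colorsOf G f).ncard := Set.ncard_le_ncard Set.diff_subset (colorsOf_finite G f)
      _ ≤ chimax G q := le_csSup hbdd2 ⟨f, hfQ, rfl⟩
  · -- chimax ≤ 2*q*M.ncard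
    refine csSup_le hne2 ?_
    rintro k ⟨f, hf, rfl⟩
    set X : Set V := {v | ∃ s ∈ M, v ∈ s} with hX
    have hXcard : X.ncard ≤ 2 * M.ncard := by
      have hXeq : X = ⋃ s ∈ M, {v | v ∈ s} := by
        ext v; simp [hX]
      rw [hXeq]
      apply ncard_biUnion_le_aux (Set.toFinite M)
      intro s hs
      induction s using Sym2.ind with
      | _ a b =>
        have heq : {v | v ∈ s(a, b)} = {a, b} := by
          ext v; simp [Sym2.mem_iff]
        rw [heq]
        calc ({a, b} : Set V).ncard ≤ ({b} : Set V).ncard + 1 := Set.ncard_insert_le _ _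
          _ ≤ 2 := by rw [Set.ncard_singleton]
    have hsub : colorsOf G f ⊆ ⋃ w ∈ X, vColors G f w := by
      rintro c ⟨u, v, huv, rfl⟩
      obtain ⟨e', he'M, w, hwuv, hwe'⟩ := hMmax s(u, v) (by rwa [SimpleGraph.mem_edgeSet])
      have hwX : w ∈ X := ⟨e', he'M, hwe'⟩
      rw [Sym2.mem_iff] at hwuv
      refine Set.mem_biUnion hwX ?_
      rcases hwuv with rfl | rfl
      · exact ⟨v, huv, rfl⟩
      · exact ⟨u, huv.symm, hf.1 w u⟩
    calc (colorsOf G f).ncard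
        ≤ (⋃ w ∈ X, vColors G f w).ncard :=
          Set.ncard_le_ncard hsub ((Set.toFinite X).biUnion (fun w _ => vColors_finite G f w))
      _ ≤ q * X.ncard := ncard_biUnion_le_aux (Set.toFinite X) (fun w _ => hf.2 w)
      _ ≤ q * (2 * M.ncard) := Nat.mul_le_mul_left _ hXcard
      _ = 2 * q * M.ncard := by ring
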